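/- The unit group of the commutative F_2-algebra R = F_2[X,Y,Z]/(XYZ - Z) is trivial, i.e., the only unit of R is 1. -/

import Mathlib

open MvPolynomial

private abbrev A3 := MvPolynomial (Fin 3) (ZMod 2)
private abbrev B2 := MvPolynomial (Fin 2) (ZMod 2)
private abbrev R1 := MvPolynomial (Fin 1) (ZMod 2)

noncomputable def e3aux : A3 ≃ₐ[ZMod 2] Polynomial B2 :=
  (renameEquiv (ZMod 2) (Equiv.swap (0:Fin 3) 2)).trans (MvPolynomial.finSuccEquiv (ZMod 2) 2)

lemma e3aux_X2 : e3aux (X 2) = Polynomial.X := by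
  simp [e3aux, finSuccEquiv_X_zero]

lemma e3aux_X0 : e3aux (X 0) = Polynomial.C (X 1) := by
  simp only [e3aux, AlgEquiv.trans_apply, renameEquiv_apply, rename_X, Equiv.swap_apply_left]
  exact finSuccEquiv_X_succ (j := 1)

lemma e3aux_X1 : e3aux (X 1) = Polynomial.C (X 0) := by
  simp only [e3aux, AlgEquiv.trans_apply, renameEquiv_apply, rename_X]
  rw [show ((Equiv.swap (0:Fin 3) 2) 1) = Fin.succ 0 by decide]
  exact finSuccEquiv_X_succ (j := 0)

noncomputable def e2aux : B2 ≃ₐ[ZMod 2] Polynomial R1 := MvPolynomial.finSuccEquiv (ZMod 2) 1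

lemma e2aux_q : e2aux (X 1 * X 0 - 1) = Polynomial.C (X 0) * Polynomial.X - 1 := by
  rw [map_sub, map_mul, map_one]
  rw [show (X (1:Fin 2) : B2) = X (Fin.succ 0) from rfl]
  rw [show e2aux (X (Fin.succ 0)) = Polynomial.C (X 0) from finSuccEquiv_X_succ,
      show e2aux (X 0) = Polynomial.X from finSuccEquiv_X_zero]

lemma dom2 : IsDomain (B2 ⧸ Ideal.span {(X 1 * X 0 - 1 : B2)}) := by
  haveI : IsDomain (AdjoinRoot (Polynomial.C (X 0 : R1) * Polynomial.X - 1)) := by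
    haveI : IsLocalization (Submonoid.powers (X 0 : R1)) (AdjoinRoot (Polynomial.C (X 0 : R1) * Polynomial.X - 1)) := IsLocalization.adjoin_inv (X 0 : R1)
    exact IsLocalization.isDomain_of_le_nonZeroDivisors (R := R1) (M := Submonoid.powers (X 0 : R1)) (AdjoinRoot (Polynomial.C (X 0 : R1) * Polynomial.X - 1))
      (powers_le_nonZeroDivisors_of_noZeroDivisors (X_ne_zero 0))
  haveI : IsDomain (Polynomial R1 ⧸ Ideal.span {Polynomial.C (X 0 : R1) * Polynomial.X - 1}) := ‹_›
  have E := Ideal.quotientEquiv (Ideal.span {(X 1 * X 0 - 1 : B2)})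
      (Ideal.span {Polynomial.C (X 0 : R1) * Polynomial.X - 1}) e2aux.toRingEquiv
      (by rw [Ideal.map_span, Set.image_singleton];
          rw [show (e2aux.toRingEquiv : B2 →+* Polynomial R1) (X 1 * X 0 - 1)
              = Polynomial.C (X 0) * Polynomial.X - 1 from e2aux_q])
  exact Function.Injective.isDomain E.toRingHom E.injective

lemma core2 {R : Type*} [CommRing R] {r : R}
    (hdom : IsDomain (R ⧸ Ideal.span ({r} : Set R))) (a b : Polynomial R)
    (h : Polynomial.C r ∣ a + b + Polynomial.X * (a * b)) : Polynomial.C r ∣ a := by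
  haveI := hdom
  set π := Ideal.Quotient.mk (Ideal.span ({r} : Set R)) with hπ
  have key : ∀ c : Polynomial R, Polynomial.C r ∣ c ↔ c.map π = 0 := by
    intro c
    rw [Polynomial.C_dvd_iff_dvd_coeff, Polynomial.ext_iff]
    refine forall_congr' fun n => ?_
    simp only [Polynomial.coeff_map, Polynomial.coeff_zero]
    rw [Ideal.Quotient.eq_zero_iff_mem, Ideal.mem_span_singleton]
  rw [key] at h ⊢
  rw [Polynomial.map_add, Polynomial.map_add, Polynomial.map_mul, Polynomial.map_mul,
    Polynomial.map_X] at h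
  set A := a.map π
  set B := b.map π
  by_contra hA
  have hB : B ≠ 0 := by
    intro h0
    rw [h0] at h
    simp at h
    exact hA h
  have hrel : Polynomial.X * (A * B) = -(A + B) := by linear_combination h
  have hd : (Polynomial.X * (A * B)).natDegree = 1 + (A.natDegree + B.natDegree) := by
    rw [Polynomial.natDegree_mul Polynomial.X_ne_zero (mul_ne_zero hA hB),
      Polynomial.natDegree_mul hA hB, Polynomial.natDegree_X]
  rw [hrel, Polynomial.natDegree_neg] at hd
  have hle := le_trans (Polynomial.natDegree_add_le A B)
    (max_le (Nat.le_add_right _ _) (Nat.le_add_left _ _))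
  omega

lemma zmod2_eq_one {x : ZMod 2} (h : IsUnit x) : x = 1 := by
  have hx : x ≠ 0 := h.ne_zero
  revert hx
  revert x
  decide

lemma mv_unit_eq_one : ∀ {n : ℕ} (f : MvPolynomial (Fin n) (ZMod 2)), IsUnit f → f = 1 := by
  intro n
  induction n with
  | zero =>
    intro f hf
    have e := MvPolynomial.isEmptyAlgEquiv (ZMod 2) (Fin 0)
    have : e f = 1 := zmod2_eq_one (hf.map e)
    have := congrArg e.symm this
    simpa using this
  | succ n ih =>
    intro f hf
    have e := MvPolynomial.finSuccEquiv (ZMod 2) n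
    have hef : IsUnit (e f) := hf.map e
    obtain ⟨r, hr, hCr⟩ := Polynomial.isUnit_iff.mp hef
    have : r = 1 := ih r hr
    rw [this, map_one] at hCr
    have := congrArg e.symm hCr
    simpa using this.symm

noncomputable def sig : A3 →ₐ[ZMod 2] A3 :=
  aeval fun i => if i = 2 then 0 else X i

lemma sig_X2 : sig (X 2) = 0 := by simp [sig]

lemma X2_dvd_sub_sig (f : A3) : (X 2 : A3) ∣ f - sig f := by
  induction f using MvPolynomial.induction_on with
  | C a => simp [sig]
  | add p q hp hq =>
    have : p + q - sig (p + q) = (p - sig p) + (q - sig q) := by rw [map_add]; ring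
    rw [this]; exact dvd_add hp hq
  | mul_X p i hp =>
    rw [map_mul]
    by_cases h2 : i = 2
    · subst h2
      rw [sig_X2, mul_zero, sub_zero]
      exact Dvd.intro_left _ rfl
    · have hsX : sig (X i) = X i := by simp [sig, h2]
      rw [hsX]
      have : p * X i - sig p * X i = (p - sig p) * X i := by ring
      rw [this]
      exact hp.mul_right _

lemma core3 (a b : A3) (h : (X 0 * X 1 - 1 : A3) ∣ a + b + X 2 * (a * b)) :
    (X 0 * X 1 - 1 : A3) ∣ a := by
  have hq : e3aux (X 0 * X 1 - 1 : A3) = Polynomial.C (X 1 * X 0 - 1 : B2) := by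
    rw [map_sub, map_mul, map_one, e3aux_X0, e3aux_X1, ← Polynomial.C_mul, ← Polynomial.C_1,
      ← Polynomial.C_sub]
  obtain ⟨c, hc⟩ := h
  have hmap : e3aux a + e3aux b + Polynomial.X * (e3aux a * e3aux b)
      = Polynomial.C (X 1 * X 0 - 1 : B2) * e3aux c := by
    have hcc := congrArg e3aux hc
    rw [map_add, map_add, map_mul, map_mul, map_mul, e3aux_X2, hq] at hcc
    exact hcc
  have hdvd : Polynomial.C (X 1 * X 0 - 1 : B2) ∣ e3aux a := core2 dom2 _ _ ⟨e3aux c, hmap⟩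
  obtain ⟨d, hd⟩ := hdvd
  refine ⟨e3aux.symm d, ?_⟩
  apply e3aux.injective
  rw [map_mul, hq, AlgEquiv.apply_symm_apply, hd]

lemma key3 (f g : A3) (h : (X 0 * X 1 * X 2 - X 2 : A3) ∣ f * g - 1) :
    (X 0 * X 1 * X 2 - X 2 : A3) ∣ f - 1 := by
  have hfac : (X 0 * X 1 * X 2 - X 2 : A3) = X 2 * (X 0 * X 1 - 1) := by ring
  obtain ⟨h1, hh1⟩ : (X 2 : A3) ∣ f * g - 1 := dvd_trans ⟨X 0 * X 1 - 1, hfac⟩ h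
  have hσ : sig f * sig g = 1 := by
    have := congrArg sig hh1
    rw [map_sub, map_mul, map_mul, map_one, sig_X2, zero_mul] at this
    linear_combination this
  have hf1 : sig f = 1 := mv_unit_eq_one _ (IsUnit.of_mul_eq_one _ hσ)
  have hg1 : sig g = 1 := mv_unit_eq_one _ (IsUnit.of_mul_eq_one _ (by rwa [mul_comm] at hσ))
  obtain ⟨a, ha⟩ := X2_dvd_sub_sig f
  obtain ⟨b, hb⟩ := X2_dvd_sub_sig g
  rw [hf1] at ha
  rw [hg1] at hb
  have hrel : f * g - 1 = X 2 * (a + b + X 2 * (a * b)) := by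
    linear_combination g * ha + (1 + X 2 * a) * hb
  rw [hrel, hfac] at h
  have hqd : (X 0 * X 1 - 1 : A3) ∣ a + b + X 2 * (a * b) :=
    (mul_dvd_mul_iff_left (X_ne_zero (2 : Fin 3))).mp h
  rw [hfac, ha]
  exact mul_dvd_mul_left _ (core3 a b hqd)

open MvPolynomial in
theorem stmt_11 :
    ∀ u : MvPolynomial (Fin 3) (ZMod 2) ⧸
        Ideal.span ({X 0 * X 1 * X 2 - X 2} : Set (MvPolynomial (Fin 3) (ZMod 2))),
      IsUnit u → u = 1 := by
  intro u hu
  obtain ⟨v, hv⟩ := hu.exists_right_inv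
  obtain ⟨f, rfl⟩ := Ideal.Quotient.mk_surjective u
  obtain ⟨g, rfl⟩ := Ideal.Quotient.mk_surjective v
  have hm : f * g - 1 ∈ Ideal.span ({X 0 * X 1 * X 2 - X 2} : Set A3) := by
    rw [← Ideal.Quotient.eq_zero_iff_mem, map_sub, map_mul, map_one, hv, sub_self]
  rw [Ideal.mem_span_singleton] at hm
  have hkey := key3 f g hm
  rw [← Ideal.mem_span_singleton] at hkey
  calc Ideal.Quotient.mk _ f = Ideal.Quotient.mk _ (1 : A3) := Ideal.Quotient.eq.mpr hkey
    _ = 1 := map_one _
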